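/- With the sequence a_1=1, a_{k+1}=8C·a_k·∏_{j=1}^{k-1}(a_k/a_j), r_k = ((2k+1)/(2k+2))a_k, and f(z) = C·z·∏_{k=1}^∞(1 - z/a_k), for C sufficiently large and all k ≥ 1: if |z| = r_k then |f(z)| ≤ (1/2)·a_{k+1}. -/

import Mathlib

private lemma geom_prod_le (c N : ℕ) :
    ∏ j ∈ Finset.Ioc c N, (1 + (1/8:ℝ)^(j - c)) ≤ 6/5 - 1/5 * (1/8:ℝ)^(N - c) := by
  induction N with
  | zero =>
    rw [Finset.Ioc_eq_empty (by omega)]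
    norm_num [Nat.zero_sub]
  | succ N ih =>
    rcases le_or_gt (N+1) c with h | h
    · rw [Finset.Ioc_eq_empty (by omega), Nat.sub_eq_zero_of_le h]
      norm_num
    · have hcN : c ≤ N := by omega
      rw [Finset.prod_Ioc_succ_top hcN]
      have h1 : N + 1 - c = (N - c) + 1 := by omega
      rw [h1, pow_succ]
      set x := (1/8:ℝ)^(N-c) with hxdef
      have hx : (0:ℝ) ≤ x := by positivity
      have hfac : (0:ℝ) ≤ 1 + x * (1/8) := by linarith
      nlinarith [mul_le_mul_of_nonneg_right ih hfac]

private lemma geom_prod_le' (c N : ℕ) :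
    ∏ j ∈ Finset.Ioc c N, (1 + (1/8:ℝ)^(j - c)) ≤ 6/5 := by
  have h : (0:ℝ) ≤ (1/8:ℝ)^(N-c) := by positivity
  linarith [geom_prod_le c N]

private lemma a_mono (C : ℝ) (hC : 1 ≤ C) (a : ℕ → ℝ)
    (hpos : ∀ k : ℕ, 1 ≤ k → 0 < a k)
    (harec : ∀ k : ℕ, 1 ≤ k → a (k+1) = 8 * C * a k * ∏ j ∈ Finset.Icc 1 (k-1), (a k / a j)) :
    ∀ m i : ℕ, 1 ≤ i → i ≤ m → a i ≤ a m := by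
  intro m
  induction m with
  | zero => intro i h1 h0; omega
  | succ m ih =>
    intro i h1 hle
    rcases Nat.lt_or_ge i (m+1) with h | h
    · have him : i ≤ m := by omega
      have h1m : 1 ≤ m := by omega
      have step : a m ≤ a (m+1) := by
        have hQ : 1 ≤ ∏ j ∈ Finset.Icc 1 (m-1), (a m / a j) := by
          rw [← Finset.prod_const_one (s := Finset.Icc 1 (m-1))]
          apply Finset.prod_le_prod (fun j hj => zero_le_one)
          intro j hj
          rw [Finset.mem_Icc] at hj
          have h2 := ih j hj.1 (by omega)
          have h3 := hpos j hj.1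
          rw [le_div_iff₀ h3]
          linarith
        have hrec := harec m h1m
        have hm := hpos m h1m
        nlinarith [mul_le_mul_of_nonneg_left hQ (le_of_lt hm)]
      exact (ih i h1 him).trans step
    · have : i = m + 1 := by omega
      rw [this]

private lemma a_gap (C : ℝ) (hC : 1 ≤ C) (a : ℕ → ℝ)
    (hpos : ∀ k : ℕ, 1 ≤ k → 0 < a k)
    (harec : ∀ k : ℕ, 1 ≤ k → a (k+1) = 8 * C * a k * ∏ j ∈ Finset.Icc 1 (k-1), (a k / a j)) :
    ∀ i : ℕ, 1 ≤ i → ∀ d : ℕ, (8:ℝ)^d * a i ≤ a (i + d) := by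
  intro i hi d
  have hmono := a_mono C hC a hpos harec
  induction d with
  | zero => simp
  | succ d ih =>
    have h1 : 1 ≤ i + d := by omega
    have hQ : 1 ≤ ∏ j ∈ Finset.Icc 1 (i+d-1), (a (i+d) / a j) := by
      rw [← Finset.prod_const_one (s := Finset.Icc 1 (i+d-1))]
      apply Finset.prod_le_prod (fun j hj => zero_le_one)
      intro j hj
      rw [Finset.mem_Icc] at hj
      have h2 := hmono (i+d) j hj.1 (by omega)
      have h3 := hpos j hj.1
      rw [le_div_iff₀ h3]
      linarith
    have hrec := harec (i+d) h1
    have hp := hpos (i+d) h1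
    have h2 : 8 * a (i+d) ≤ a (i+d+1) := by
      nlinarith [mul_le_mul_of_nonneg_left hQ (le_of_lt hp)]
    have h3 : (8:ℝ)^(d+1) * a i = 8 * ((8:ℝ)^d * a i) := by
      rw [pow_succ]; ring
    have h4 : (i + (d+1)) = (i + d) + 1 := rfl
    rw [h4, h3]
    nlinarith

set_option maxHeartbeats 1000000 in
/-- With a_1=1, a_{k+1}=8C·a_k·∏_{j=1}^{k-1}(a_k/a_j), r_k = ((2k+1)/(2k+2))a_k and
f(z) = C·z·∏(1 - z/a_k): for C sufficiently large and all k ≥ 1, if |z| = r_k then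
|f(z)| ≤ (1/2)a_{k+1}. -/
theorem stmt6 : ∃ C0 : ℝ, ∀ C : ℝ, C0 ≤ C →
    ∀ a : ℕ → ℝ, (∀ k : ℕ, 1 ≤ k → 0 < a k) → a 1 = 1 →
    (∀ k : ℕ, 1 ≤ k → a (k+1) = 8 * C * a k * ∏ j ∈ Finset.Icc 1 (k-1), (a k / a j)) →
    ∀ f : ℂ → ℂ, (∀ z, f z = C * z * ∏' i : ℕ, (1 - z / (a (i+1) : ℂ))) →
    ∀ k : ℕ, 1 ≤ k → ∀ z : ℂ,
      ‖z‖ = (2 * (k : ℝ) + 1) / (2 * (k : ℝ) + 2) * a k →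
      ‖f z‖ ≤ a (k+1) / 2 := by
  refine ⟨1, ?_⟩
  intro C hC a hpos ha1 harec f hf k hk z hz
  have hak : 0 < a k := hpos k hk
  have hgap := a_gap C hC a hpos harec
  set r : ℝ := (2 * (k:ℝ) + 1) / (2 * (k:ℝ) + 2) * a k with hrdef
  have hden : (0:ℝ) < 2*(k:ℝ)+2 := by positivity
  have hr0 : 0 ≤ r :=
    mul_nonneg (div_nonneg (by positivity) (le_of_lt hden)) (le_of_lt hak)
  have hrle : r ≤ a k := by
    rw [hrdef]
    have h1 : (2*(k:ℝ)+1)/(2*(k:ℝ)+2) ≤ 1 := by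
      rw [div_le_one hden]; linarith
    nlinarith
  have hdiv : ∀ i j : ℕ, 1 ≤ i → i ≤ j → a i ≤ (1/8:ℝ)^(j-i) * a j := by
    intro i j hi hij
    have h := hgap i hi (j - i)
    rw [show i + (j - i) = j by omega] at h
    have h8 : (0:ℝ) < (8:ℝ)^(j-i) := by positivity
    rw [one_div, inv_pow, ← div_eq_inv_mul, le_div_iff₀ h8]
    nlinarith
  set P : ℝ := ∏ j ∈ Finset.Icc 1 (k-1), (a k / a j) with hPdef
  have hP0 : 0 < P :=
    Finset.prod_pos (fun j hj => div_pos hak (hpos j (Finset.mem_Icc.mp hj).1))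
  have hIcc : Finset.Icc 1 (k-1) = Finset.Ioc 0 (k-1) := Finset.Icc_add_one_left_eq_Ioc 0 (k-1)
  set g : ℕ → ℝ := fun j => 1 + r / a j with hgdef
  have hg1 : ∀ j, 1 ≤ j → 1 ≤ g j := by
    intro j hj
    have h1 := hpos j hj
    have h2 : 0 ≤ r / a j := div_nonneg hr0 (le_of_lt h1)
    simp only [hgdef]
    linarith
  -- main finite product bound for N ≥ k
  have key0 : ∀ N, k ≤ N → ∏ j ∈ Finset.Ioc 0 N, g j ≤ 4 * P := by
    intro N hN
    rw [← Finset.prod_Ioc_consecutive g (Nat.zero_le k) hN]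
    have e2 : ∏ j ∈ Finset.Ioc 0 k, g j = (∏ j ∈ Finset.Ioc 0 (k-1), g j) * g k := by
      conv_lhs => rw [show k = (k-1)+1 by omega]
      rw [Finset.prod_Ioc_succ_top (Nat.zero_le _), show (k-1)+1 = k by omega]
    rw [e2]
    have front : ∏ j ∈ Finset.Ioc 0 (k-1), g j ≤ P * (6/5) := by
      have hb : ∀ j ∈ Finset.Ioc 0 (k-1), g j ≤ (a k / a j) * (1 + (1/8:ℝ)^(k-j)) := by
        intro j hj
        rw [Finset.mem_Ioc] at hj
        have hj1 : 1 ≤ j := hj.1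
        have hjk : j ≤ k := by omega
        have haj := hpos j hj1
        have hd := hdiv j k hj1 hjk
        have h1 : r / a j ≤ a k / a j := by
          gcongr
        have h2 : 1 ≤ (a k / a j) * (1/8:ℝ)^(k-j) := by
          rw [div_mul_eq_mul_div, le_div_iff₀ haj]
          nlinarith
        simp only [hgdef]
        rw [mul_add, mul_one]
        linarith
      calc ∏ j ∈ Finset.Ioc 0 (k-1), g j
          ≤ ∏ j ∈ Finset.Ioc 0 (k-1), ((a k / a j) * (1 + (1/8:ℝ)^(k-j))) := by
            apply Finset.prod_le_prod
            · intro j hj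
              have := hg1 j (Finset.mem_Ioc.mp hj).1
              linarith
            · exact hb
        _ = (∏ j ∈ Finset.Ioc 0 (k-1), (a k / a j)) *
              ∏ j ∈ Finset.Ioc 0 (k-1), (1 + (1/8:ℝ)^(k-j)) := Finset.prod_mul_distrib
        _ ≤ P * (6/5) := by
            apply mul_le_mul
            · rw [hPdef, hIcc]
            · have e3 : ∏ j ∈ Finset.Ioc 0 (k-1), (1 + (1/8:ℝ)^(k-j))
                  = ∏ m ∈ Finset.Ioc 0 (k-1), (1 + (1/8:ℝ)^(m-0)) := by
                apply Finset.prod_nbij' (fun j => k - j) (fun m => k - m)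
                · intro x hx; rw [Finset.mem_Ioc] at *; omega
                · intro x hx; rw [Finset.mem_Ioc] at *; omega
                · intro x hx; rw [Finset.mem_Ioc] at hx; omega
                · intro x hx; rw [Finset.mem_Ioc] at hx; omega
                · intro x hx
                  simp
              rw [e3]
              exact geom_prod_le' 0 (k-1)
            · apply Finset.prod_nonneg
              intro j hj
              positivity
            · exact le_of_lt hP0
    have mid : g k ≤ 2 := by
      simp only [hgdef]
      have : r / a k ≤ 1 := by rw [div_le_one hak]; exact hrle
      linarith
    have tail : ∏ j ∈ Finset.Ioc k N, g j ≤ 6/5 := by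
      have hb : ∀ j ∈ Finset.Ioc k N, g j ≤ 1 + (1/8:ℝ)^(j-k) := by
        intro j hj
        rw [Finset.mem_Ioc] at hj
        have hj1 : 1 ≤ j := by omega
        have haj := hpos j hj1
        have hd := hdiv k j hk (le_of_lt hj.1)
        have h1 : r / a j ≤ (1/8:ℝ)^(j-k) := by
          rw [div_le_iff₀ haj]
          nlinarith
        simp only [hgdef]
        linarith
      calc ∏ j ∈ Finset.Ioc k N, g j
          ≤ ∏ j ∈ Finset.Ioc k N, (1 + (1/8:ℝ)^(j-k)) := by
            apply Finset.prod_le_prod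
            · intro j hj
              have := hg1 j (by rw [Finset.mem_Ioc] at hj; omega)
              linarith
            · exact hb
        _ ≤ 6/5 := geom_prod_le' k N
    have hf1 : (0:ℝ) ≤ ∏ j ∈ Finset.Ioc 0 (k-1), g j := by
      apply Finset.prod_nonneg
      intro j hj
      have := hg1 j (Finset.mem_Ioc.mp hj).1
      linarith
    have hf2 : (0:ℝ) ≤ ∏ j ∈ Finset.Ioc k N, g j := by
      apply Finset.prod_nonneg
      intro j hj
      have := hg1 j (by rw [Finset.mem_Ioc] at hj; omega)
      linarith
    have hgk0 : (0:ℝ) ≤ g k := le_trans zero_le_one (hg1 k hk)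
    have htot : (∏ j ∈ Finset.Ioc 0 (k-1), g j) * g k * ∏ j ∈ Finset.Ioc k N, g j
        ≤ P * (6/5) * 2 * (6/5) := by
      apply mul_le_mul _ tail hf2 (by positivity)
      apply mul_le_mul front mid hgk0 (by positivity)
    exact le_trans htot (by nlinarith [hP0])
  -- bound for arbitrary finsets
  have keyS : ∀ s : Finset ℕ, ∏ i ∈ s, g (i+1) ≤ 4 * P := by
    intro s
    obtain ⟨n, hn⟩ := s.exists_nat_subset_range
    set N := max n k with hNdef
    have hsub : s ⊆ Finset.range N := hn.trans (Finset.range_subset_range.mpr (le_max_left n k))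
    have h1 : ∏ i ∈ s, g (i+1) ≤ ∏ i ∈ Finset.range N, g (i+1) := by
      rw [← Finset.prod_sdiff hsub]
      have hsd : 1 ≤ ∏ i ∈ Finset.range N \ s, g (i+1) := by
        rw [← Finset.prod_const_one (s := Finset.range N \ s)]
        apply Finset.prod_le_prod (fun i _ => zero_le_one)
        intro i _
        exact hg1 (i+1) (by omega)
      have hs0 : 0 ≤ ∏ i ∈ s, g (i+1) := by
        apply Finset.prod_nonneg
        intro i _
        have := hg1 (i+1) (by omega)
        linarith
      exact le_mul_of_one_le_left hs0 hsd
    have h2 : ∏ i ∈ Finset.range N, g (i+1) = ∏ j ∈ Finset.Ioc 0 N, g j := by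
      rw [show Finset.Ioc 0 N = Finset.Ico 1 (N+1) by
        rw [Finset.Ico_add_one_right_eq_Icc]; exact (Finset.Icc_add_one_left_eq_Ioc 0 N).symm]
      rw [Finset.prod_Ico_eq_prod_range]
      simp [add_comm]
    calc ∏ i ∈ s, g (i+1) ≤ ∏ i ∈ Finset.range N, g (i+1) := h1
      _ = ∏ j ∈ Finset.Ioc 0 N, g j := h2
      _ ≤ 4 * P := key0 N (le_max_right n k)
  -- complex factors
  set F : ℕ → ℂ := fun i => 1 - z / (a (i+1) : ℂ) with hFdef
  have habsF : ∀ i, ‖F i‖ ≤ g (i+1) := by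
    intro i
    have h1 : 1 ≤ i + 1 := by omega
    have haj := hpos (i+1) h1
    have h2 : ‖z / (a (i+1) : ℂ)‖ = r / a (i+1) := by
      rw [norm_div, hz, Complex.norm_real, Real.norm_eq_abs, abs_of_pos haj]
    have h3 := norm_sub_le (1:ℂ) (z / (a (i+1) : ℂ))
    simp only [norm_one] at h3
    calc ‖F i‖ ≤ 1 + ‖z / (a (i+1) : ℂ)‖ := h3
      _ = g (i+1) := by rw [h2]
  -- multipliability
  have hM : Multipliable F := by
    by_cases hzero : ∃ i, F i = 0
    · obtain ⟨i0, hi0⟩ := hzero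
      refine ⟨0, ?_⟩
      rw [HasProd]
      apply Filter.Tendsto.congr' _ tendsto_const_nhds
      filter_upwards [Filter.eventually_ge_atTop ({i0} : Finset ℕ)] with s hs
      exact (Finset.prod_eq_zero (hs (Finset.mem_singleton_self i0)) hi0).symm
    · push_neg at hzero
      apply Complex.multipliable_of_summable_log
      rw [← summable_nat_add_iff k]
      apply Summable.of_norm_bounded (g := fun n => (3/2) * ((1/8:ℝ)^n))
        (Summable.mul_left _ (summable_geometric_of_lt_one (by norm_num) (by norm_num)))
      intro n
      show ‖Complex.log (F (n + k))‖ ≤ 3/2 * (1/8:ℝ)^n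
      have h1 : 1 ≤ n + k + 1 := by omega
      have haj := hpos (n+k+1) h1
      have hw : ‖z / (a (n+k+1) : ℂ)‖ = r / a (n+k+1) := by
        rw [norm_div, hz, Complex.norm_real, Real.norm_eq_abs, abs_of_pos haj]
      have hd := hdiv k (n+k+1) hk (by omega)
      rw [show n+k+1-k = n+1 by omega] at hd
      have hx18 : (0:ℝ) < (1/8:ℝ)^(n+1) := by positivity
      have hsmall : ‖-(z / (a (n+k+1) : ℂ))‖ ≤ (1/8:ℝ)^(n+1) := by
        rw [norm_neg, hw, div_le_iff₀ haj]
        nlinarith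
      have hhalf : ‖-(z / (a (n+k+1) : ℂ))‖ ≤ 1/2 := by
        have : ((1:ℝ)/8)^(n+1) ≤ 1/2 := by
          calc ((1:ℝ)/8)^(n+1) ≤ ((1:ℝ)/8)^1 :=
                pow_le_pow_of_le_one (by norm_num) (by norm_num) (by omega)
            _ ≤ 1/2 := by norm_num
        linarith
      have hFe : F (n + k) = 1 + -(z / (a (n+k+1) : ℂ)) := by
        simp only [hFdef]
        rw [sub_eq_add_neg]
      rw [hFe]
      calc ‖Complex.log (1 + -(z / (a (n+k+1) : ℂ)))‖
          ≤ (3/2) * ‖-(z / (a (n+k+1) : ℂ))‖ := Complex.norm_log_one_add_half_le_self hhalf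
        _ ≤ (3/2) * ((1/8:ℝ)^(n+1)) := by linarith
        _ ≤ (3/2) * ((1/8:ℝ)^n) := by
            have : ((1:ℝ)/8)^(n+1) ≤ ((1:ℝ)/8)^n :=
              pow_le_pow_of_le_one (by norm_num) (by norm_num) (by omega)
            linarith
  -- pass to the tprod
  have hProd : HasProd F (∏' i, F i) := hM.hasProd
  have habs : Filter.Tendsto (fun s : Finset ℕ => ∏ i ∈ s, ‖F i‖)
      Filter.atTop (nhds (‖∏' i, F i‖)) := by
    have h := (continuous_norm.tendsto (∏' i, F i)).comp hProd
    apply h.congr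
    intro s
    simp [Function.comp, norm_prod]
  have hT : ‖∏' i, F i‖ ≤ 4 * P := by
    apply le_of_tendsto' habs
    intro s
    calc ∏ i ∈ s, ‖F i‖
        ≤ ∏ i ∈ s, g (i+1) :=
          Finset.prod_le_prod (fun i _ => norm_nonneg _) (fun i _ => habsF i)
      _ ≤ 4 * P := keyS s
  have hfz : ‖f z‖ = C * r * ‖∏' i, F i‖ := by
    rw [hf z, norm_mul, norm_mul, Complex.norm_real, Real.norm_eq_abs, hz,
      abs_of_pos (show (0:ℝ) < C by linarith)]
  rw [hfz]
  have hrec := harec k hk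
  have hCr : 0 ≤ C * r := mul_nonneg (by linarith) hr0
  have s1 : C * r * ‖∏' i, F i‖ ≤ C * r * (4 * P) :=
    mul_le_mul_of_nonneg_left hT hCr
  have s2 : C * r * (4 * P) ≤ C * a k * (4 * P) := by
    apply mul_le_mul_of_nonneg_right _ (by positivity)
    apply mul_le_mul_of_nonneg_left hrle (by linarith)
  rw [← hPdef] at hrec
  nlinarith [s1, s2, hrec]
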